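/- Let g ∈ ℝ. If p ∈ ℂ[z₁,z₂] is a nonzero polynomial and λ ∈ ℂ satisfies Q(g)p = λ·p, then λ is a nonnegative integer (indeed λ = m for some m ≤ deg p). In particular, every eigenvalue of Q(g) on polynomials is real, so the point spectrum of the non-selfadjoint PT-symmetric operator Q(g) on polynomials is {0, 1, 2, …}. -/

import Mathlib

open MvPolynomial

/-- The Bargmann-space representation of `H(g) − 1`:
`Q(g)p = z₁·∂p/∂z₁ + z₂·∂p/∂z₂ + i g·z₂·∂p/∂z₁` on `ℂ[z₁,z₂]`
(`X 0` plays the role of `z₁` and `X 1` that of `z₂`). -/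
noncomputable def Qop (g : ℝ) (p : MvPolynomial (Fin 2) ℂ) : MvPolynomial (Fin 2) ℂ :=
  X 0 * pderiv 0 p + X 1 * pderiv 1 p + (Complex.I * (g : ℂ)) • (X 1 * pderiv 0 p)

lemma coeff_pderiv_aux (i : Fin 2) (ν : Fin 2 →₀ ℕ) (p : MvPolynomial (Fin 2) ℂ) :
    coeff ν (pderiv i p) = ((ν i : ℂ) + 1) * coeff (ν + Finsupp.single i 1) p := by
  induction p using MvPolynomial.induction_on' with
  | add p q hp hq => simp [hp, hq, mul_add]
  | monomial s a =>
    rw [pderiv_monomial, coeff_monomial, coeff_monomial]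
    by_cases h : s = ν + Finsupp.single i 1
    · subst h
      have h1 : ν + Finsupp.single i 1 - Finsupp.single i 1 = ν := by
        ext j; simp [Finsupp.single_apply]
      have : ((ν + Finsupp.single i 1 : Fin 2 →₀ ℕ)) i = ν i + 1 := by simp
      rw [if_pos h1, this, if_pos rfl]
      push_cast; ring
    · rw [if_neg h]
      by_cases h2 : s - Finsupp.single i 1 = ν
      · rw [if_pos h2]
        have hsi : s i = 0 := by
          by_contra hsi
          apply h
          ext j
          by_cases hj : j = i
          · subst hj
            have := DFunLike.congr_fun h2 j
            simp [Finsupp.sub_apply] at this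
            simp [this.symm]; omega
          · have := DFunLike.congr_fun h2 j
            simp [Finsupp.sub_apply, Finsupp.single_apply, hj, Ne.symm hj] at this ⊢
            omega
        simp [hsi]
      · rw [if_neg h2, mul_zero]

/-- every eigenvalue of `Q(g)` on polynomials is a nonnegative integer:
if `p ≠ 0` and `Q(g)p = λ·p` then `λ = m` for some natural number `m ≤ deg p`. -/
theorem Qop_eigenvalue_natCast (g : ℝ) (p : MvPolynomial (Fin 2) ℂ) (hp : p ≠ 0)
    (lam : ℂ) (hlam : Qop g p = lam • p) :
    ∃ m : ℕ, lam = (m : ℂ) ∧ m ≤ p.totalDegree := by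
  classical
  set d := p.totalDegree with hd
  -- pick μ in support maximizing f
  have hsupp : p.support.Nonempty := by
    rwa [Finset.nonempty_iff_ne_empty, Ne, MvPolynomial.support_eq_empty]
  obtain ⟨μ, hμ, hmax⟩ := p.support.exists_max_image
    (fun ν => (ν 0 + ν 1) * (d + 1) + ν 0) hsupp
  have hsum : ∀ ν ∈ p.support, ν 0 + ν 1 ≤ d := by
    intro ν hν
    have := MvPolynomial.le_totalDegree (p := p) hν
    rwa [Finsupp.sum_fintype _ _ (fun _ => rfl), Fin.sum_univ_two] at this
  -- the key coefficient identity at μ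
  have hc := congrArg (coeff μ) hlam
  rw [Qop, coeff_add, coeff_add, coeff_smul, coeff_smul, smul_eq_mul, smul_eq_mul] at hc
  have hμ0 : coeff μ p ≠ 0 := by rwa [MvPolynomial.mem_support_iff] at hμ
  -- first term
  have h1 : coeff μ (X 0 * pderiv 0 p) = (μ 0 : ℂ) * coeff μ p := by
    rw [coeff_X_mul']
    by_cases h : (0 : Fin 2) ∈ μ.support
    · rw [if_pos h, coeff_pderiv_aux]
      have hν0 : μ 0 ≠ 0 := Finsupp.mem_support_iff.mp h
      have e1 : μ - Finsupp.single 0 1 + Finsupp.single 0 1 = μ := by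
        ext j
        by_cases hj : j = 0
        · subst hj; simp [Finsupp.sub_apply]; omega
        · simp [Finsupp.sub_apply, Finsupp.single_apply, Ne.symm hj]
      have e2 : (((μ - Finsupp.single 0 1 : Fin 2 →₀ ℕ)) 0 : ℂ) + 1 = (μ 0 : ℂ) := by
        have : ((μ - Finsupp.single 0 1 : Fin 2 →₀ ℕ)) 0 = μ 0 - 1 := by simp [Finsupp.sub_apply]
        rw [this]
        exact_mod_cast congrArg (Nat.cast (R := ℂ)) (Nat.sub_add_cancel (Nat.one_le_iff_ne_zero.mpr hν0))
      rw [e1, e2]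
    · rw [if_neg h]
      have : μ 0 = 0 := by simpa using (Finsupp.notMem_support_iff.mp h)
      rw [this]; simp
  have h2 : coeff μ (X 1 * pderiv 1 p) = (μ 1 : ℂ) * coeff μ p := by
    rw [coeff_X_mul']
    by_cases h : (1 : Fin 2) ∈ μ.support
    · rw [if_pos h, coeff_pderiv_aux]
      have hν0 : μ 1 ≠ 0 := Finsupp.mem_support_iff.mp h
      have e1 : μ - Finsupp.single 1 1 + Finsupp.single 1 1 = μ := by
        ext j
        by_cases hj : j = 1
        · subst hj; simp [Finsupp.sub_apply]; omega
        · simp [Finsupp.sub_apply, Finsupp.single_apply, Ne.symm hj]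
      have e2 : (((μ - Finsupp.single 1 1 : Fin 2 →₀ ℕ)) 1 : ℂ) + 1 = (μ 1 : ℂ) := by
        have : ((μ - Finsupp.single 1 1 : Fin 2 →₀ ℕ)) 1 = μ 1 - 1 := by simp [Finsupp.sub_apply]
        rw [this]
        exact_mod_cast congrArg (Nat.cast (R := ℂ)) (Nat.sub_add_cancel (Nat.one_le_iff_ne_zero.mpr hν0))
      rw [e1, e2]
    · rw [if_neg h]
      have : μ 1 = 0 := by simpa using (Finsupp.notMem_support_iff.mp h)
      rw [this]; simp
  -- third term vanishes at μ by maximality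
  have h3 : coeff μ (X 1 * pderiv 0 p) = 0 := by
    rw [coeff_X_mul']
    by_cases h : (1 : Fin 2) ∈ μ.support
    · rw [if_pos h, coeff_pderiv_aux]
      set μ' := μ - Finsupp.single 1 1 + Finsupp.single 0 1 with hμ'
      have hν1 : μ 1 ≠ 0 := Finsupp.mem_support_iff.mp h
      have hμ'0 : μ' 0 = μ 0 + 1 := by simp [hμ', Finsupp.sub_apply]
      have hμ'1 : μ' 1 = μ 1 - 1 := by
        simp [hμ', Finsupp.sub_apply, Finsupp.single_apply]
      have : coeff μ' p = 0 := by
        by_contra hne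
        have hmem : μ' ∈ p.support := MvPolynomial.mem_support_iff.mpr hne
        have := hmax μ' hmem
        rw [hμ'0, hμ'1] at this
        have hs : μ 0 + 1 + (μ 1 - 1) = μ 0 + μ 1 := by omega
        rw [hs] at this
        omega
      rw [this, mul_zero]
    · rw [if_neg h]
  rw [h1, h2, h3, mul_zero, add_zero] at hc
  have hlam_eq : lam = (μ 0 : ℂ) + (μ 1 : ℂ) := by
    have : ((μ 0 : ℂ) + (μ 1 : ℂ)) * coeff μ p = lam * coeff μ p := by
      rw [← hc]; ring
    exact (mul_right_cancel₀ hμ0 this).symm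
  refine ⟨μ 0 + μ 1, by push_cast [hlam_eq]; ring, hsum μ hμ⟩
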